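/- Let q be an odd prime power, u ∈ F_q with u ∉ {0, 1, -1}, and F(x) = x^((q+3)/2) + u·x^2 on F_q. Fix a ∈ F_q* and b ∈ F_q. If x ∈ F_q satisfies F(x+a) - F(x) = b, and both x and x+a are nonsquares in F_q, then x = (b - (u-1)a^2) / (2a(u-1)). -/

import Mathlib

/-- Case `C_{-1,-1}`: if `x` and `x + a` are nonsquares and
`F(x+a) - F(x) = b` for `F x = x^((q+3)/2) + u x^2`, then
`x = (b - (u-1) a^2) / (2 a (u-1))`. -/
theorem stmt4 {K : Type*} [Field K] [Fintype K] (hodd : Odd (Fintype.card K))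
    (u : K) (hu0 : u ≠ 0) (hu1 : u ≠ 1) (hum1 : u ≠ -1)
    (a : K) (ha : a ≠ 0) (b x : K)
    (hx : ¬ IsSquare x) (hxa : ¬ IsSquare (x + a))
    (heq : (x + a) ^ ((Fintype.card K + 3) / 2) + u * (x + a) ^ 2
        - (x ^ ((Fintype.card K + 3) / 2) + u * x ^ 2) = b) :
    x = (b - (u - 1) * a ^ 2) / (2 * a * (u - 1)) := by
  obtain ⟨k, hk⟩ := hodd
  have hchar : ringChar K ≠ 2 := by
    intro h
    have := FiniteField.even_card_of_char_two h
    omega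
  have hx0 : x ≠ 0 := fun h => hx (h ▸ IsSquare.zero)
  have hxa0 : x + a ≠ 0 := fun h => hxa (h ▸ IsSquare.zero)
  have key : ∀ y : K, y ≠ 0 → ¬ IsSquare y →
      y ^ ((Fintype.card K + 3) / 2) = -y ^ 2 := by
    intro y hy hsq
    have h1 : y ^ (Fintype.card K / 2) = -1 := by
      rcases FiniteField.pow_dichotomy hchar hy with h | h
      · exact absurd ((FiniteField.isSquare_iff hchar hy).mpr h) hsq
      · exact h
    have h2 : (Fintype.card K + 3) / 2 = Fintype.card K / 2 + 2 := by omega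
    rw [h2, pow_add, h1]; ring
  rw [key _ hx0 hx, key _ hxa0 hxa] at heq
  have h2 : (2 : K) ≠ 0 := Ring.two_ne_zero hchar
  have hu1' : u - 1 ≠ 0 := sub_ne_zero.mpr hu1
  rw [eq_div_iff (by simp [Ring.two_ne_zero hchar, ha, hu1'] : 2 * a * (u - 1) ≠ 0)]
  linear_combination heq
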